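/- Let r ≥ 0, R > 0, ε > 0 with 8ε/R ≤ G₀ e^{G₁ r}, and define f : ℝ → ℝ by f(x) = (G₀/G₁)(exp(G₁|x - R/2|) - 1) for |x - R/2| ≤ r and f(x) = (8ε/R)(|x - R/2| - r) + (G₀/G₁)(exp(G₁ r) - 1) for |x - R/2| > r, where r = max{0, (1/G₁) ln(8ε/(R G₀))}. Then f is convex, differentiable at |x - R/2| = r when r > 0, and every subgradient g at any x satisfies |g| ≤ G₀ + G₁(f(x) - f*), where f* = 0. -/

import Mathlib

open Real

set_option maxHeartbeats 1000000 in
theorem sgd_lower_bound_glued_instance (R G₀ G₁ ε r : ℝ)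
    (hR : 0 < R) (hG₀ : 0 < G₀) (hG₁ : 0 < G₁) (hε : 0 < ε)
    (hr : r = max 0 ((1 / G₁) * Real.log (8 * ε / (R * G₀))))
    (hslope : 8 * ε / R ≤ G₀ * Real.exp (G₁ * r))
    (f : ℝ → ℝ)
    (hf : ∀ x, f x =
      if |x - R / 2| ≤ r then (G₀ / G₁) * (Real.exp (G₁ * |x - R / 2|) - 1)
      else (8 * ε / R) * (|x - R / 2| - r) + (G₀ / G₁) * (Real.exp (G₁ * r) - 1)) :
    ConvexOn ℝ Set.univ f ∧
    (0 < r → DifferentiableAt ℝ f (R / 2 + r) ∧ DifferentiableAt ℝ f (R / 2 - r)) ∧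
    (∀ x g : ℝ, (∀ y, f x + g * (y - x) ≤ f y) →
      |g| ≤ G₀ + G₁ * (f x - 0)) := by
  set c : ℝ := R / 2 with hc_def
  set s : ℝ := 8 * ε / R with hs_def
  have hspos : 0 < s := by positivity
  have hr0 : 0 ≤ r := hr ▸ le_max_left _ _
  have hsle : s ≤ G₀ * Real.exp (G₁ * r) := hslope
  -- exact tangency when r > 0
  have hseq : 0 < r → s = G₀ * Real.exp (G₁ * r) := by
    intro hrpos
    have hw : r = (1 / G₁) * Real.log (8 * ε / (R * G₀)) := by
      rcases max_cases (0:ℝ) ((1 / G₁) * Real.log (8 * ε / (R * G₀))) with ⟨h1, h2⟩ | ⟨h1, h2⟩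
      · rw [hr, h1] at hrpos; exact absurd hrpos (lt_irrefl 0)
      · rw [hr, h1]
    have hlog : G₁ * r = Real.log (8 * ε / (R * G₀)) := by
      rw [hw]; field_simp
    have hpos : (0:ℝ) < 8 * ε / (R * G₀) := by positivity
    have : Real.exp (G₁ * r) = 8 * ε / (R * G₀) := by
      rw [hlog, Real.exp_log hpos]
    rw [this, hs_def]
    field_simp
  -- abbreviations
  set E : ℝ → ℝ := fun t => (G₀ / G₁) * (Real.exp (G₁ * t) - 1) with hE_def
  set D : ℝ → ℝ := fun t => min (G₀ * Real.exp (G₁ * min t r)) s with hD_def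
  set φ : ℝ → ℝ := fun t => if t ≤ r then E t else s * (t - r) + E r with hφ_def
  have hfφ : ∀ x, f x = φ |x - c| := fun x => hf x
  -- tangent line inequality for E
  have htan : ∀ a b : ℝ, E a + (G₀ * Real.exp (G₁ * a)) * (b - a) ≤ E b := by
    intro a b
    have h1 : 1 + G₁ * (b - a) ≤ Real.exp (G₁ * (b - a)) := by
      have := Real.add_one_le_exp (G₁ * (b - a)); linarith
    have h2 : Real.exp (G₁ * b) = Real.exp (G₁ * a) * Real.exp (G₁ * (b - a)) := by
      rw [← Real.exp_add]; ring_nf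
    have hea : (0:ℝ) < Real.exp (G₁ * a) := Real.exp_pos _
    have h3 : Real.exp (G₁ * a) * (1 + G₁ * (b - a)) ≤ Real.exp (G₁ * b) := by
      rw [h2]; exact mul_le_mul_of_nonneg_left h1 hea.le
    have h4 : (G₀ / G₁) * (Real.exp (G₁ * a) * (1 + G₁ * (b - a))) ≤ (G₀ / G₁) * Real.exp (G₁ * b) :=
      mul_le_mul_of_nonneg_left h3 (by positivity)
    have h5 : (G₀ / G₁) * (Real.exp (G₁ * a) * (1 + G₁ * (b - a)))
        = (G₀ / G₁) * Real.exp (G₁ * a) + (G₀ * Real.exp (G₁ * a)) * (b - a) := by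
      field_simp
    simp only [hE_def]
    nlinarith [h4, h5]
  have hD0 : ∀ t, 0 ≤ D t := fun t => le_min (by positivity) hspos.le
  have hDle2 : ∀ t, D t ≤ s := fun t => min_le_right _ _
  -- convexity of the profile φ with slope D
  have hDconv : ∀ t₁ t₂ : ℝ, 0 ≤ t₁ → 0 ≤ t₂ → φ t₁ + D t₁ * (t₂ - t₁) ≤ φ t₂ := by
    intro t₁ t₂ h1 h2
    by_cases ht1 : t₁ ≤ r
    · have hm : min t₁ r = t₁ := min_eq_left ht1
      have hDle1 : D t₁ ≤ G₀ * Real.exp (G₁ * t₁) := by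
        simpa [hD_def, hm] using min_le_left (G₀ * Real.exp (G₁ * min t₁ r)) s
      by_cases ht2 : t₂ ≤ r
      · simp only [hφ_def, if_pos ht1, if_pos ht2]
        rcases le_or_gt t₁ t₂ with h | h
        · have hmul : D t₁ * (t₂ - t₁) ≤ G₀ * Real.exp (G₁ * t₁) * (t₂ - t₁) :=
            mul_le_mul_of_nonneg_right hDle1 (by linarith)
          linarith [htan t₁ t₂]
        · have hrpos : 0 < r := lt_of_lt_of_le (lt_of_le_of_lt h2 h) ht1
          have hs' := hseq hrpos
          have hE'le : G₀ * Real.exp (G₁ * t₁) ≤ s := by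
            rw [hs']
            have : Real.exp (G₁ * t₁) ≤ Real.exp (G₁ * r) :=
              Real.exp_le_exp.mpr (by nlinarith)
            nlinarith
          have hDeq : D t₁ = G₀ * Real.exp (G₁ * t₁) := by
            simp only [hD_def, hm]; exact min_eq_left hE'le
          rw [hDeq]; exact htan t₁ t₂
      · push_neg at ht2
        simp only [hφ_def, if_pos ht1, if_neg (not_le.mpr ht2)]
        have ht := htan t₁ r
        have h3 : D t₁ * (r - t₁) ≤ G₀ * Real.exp (G₁ * t₁) * (r - t₁) :=
          mul_le_mul_of_nonneg_right hDle1 (by linarith)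
        have h4 : D t₁ * (t₂ - r) ≤ s * (t₂ - r) :=
          mul_le_mul_of_nonneg_right (hDle2 t₁) (by linarith)
        have h5 : D t₁ * (t₂ - t₁) = D t₁ * (r - t₁) + D t₁ * (t₂ - r) := by ring
        linarith
    · push_neg at ht1
      have hm : min t₁ r = r := min_eq_right ht1.le
      have hDeq : D t₁ = s := by
        simp only [hD_def, hm]; exact min_eq_right hsle
      rw [hDeq]
      by_cases ht2 : t₂ ≤ r
      · simp only [hφ_def, if_neg (not_le.mpr ht1), if_pos ht2]
        rcases hr0.eq_or_lt with hr' | hr'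
        · have ht2' : t₂ = r := le_antisymm ht2 (hr' ▸ h2)
          rw [ht2']; linarith
        · have hs' := hseq hr'
          have ht := htan r t₂
          rw [← hs'] at ht
          linarith
      · push_neg at ht2
        simp only [hφ_def, if_neg (not_le.mpr ht1), if_neg (not_le.mpr ht2)]
        linarith
  -- global subgradient inequality
  have hsub : ∀ x y : ℝ, f x + Real.sign (x - c) * D |x - c| * (y - x) ≤ f y := by
    intro x y
    rw [hfφ x, hfφ y]
    have h1 := hDconv |x - c| |y - c| (abs_nonneg _) (abs_nonneg _)
    have h2 : Real.sign (x - c) * (y - c - (x - c)) ≤ |y - c| - |x - c| := by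
      rcases lt_trichotomy (x - c) 0 with h | h | h
      · rw [Real.sign_of_neg h, abs_of_neg h]
        have := neg_le_abs (y - c)
        linarith
      · rw [h, Real.sign_zero, abs_zero]
        simp [abs_nonneg]
      · rw [Real.sign_of_pos h, abs_of_pos h]
        have := le_abs_self (y - c)
        linarith
    have h3 : Real.sign (x - c) * D |x - c| * (y - x) ≤ D |x - c| * (|y - c| - |x - c|) := by
      have he : y - x = (y - c) - (x - c) := by ring
      rw [he]
      calc Real.sign (x - c) * D |x - c| * ((y - c) - (x - c))
          = D |x - c| * (Real.sign (x - c) * ((y - c) - (x - c))) := by ring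
        _ ≤ D |x - c| * (|y - c| - |x - c|) := mul_le_mul_of_nonneg_left h2 (hD0 _)
    linarith
  -- derivative on the right of c
  have hderR : ∀ x : ℝ, c < x → HasDerivAt f (D (x - c)) x := by
    intro x hx
    have hF₁ : ∀ z : ℝ, HasDerivAt (fun y => (G₀ / G₁) * (Real.exp (G₁ * (y - c)) - 1))
        (G₀ * Real.exp (G₁ * (z - c))) z := by
      intro z
      have h1 : HasDerivAt (fun y : ℝ => G₁ * (y - c)) G₁ z := by
        simpa using ((hasDerivAt_id z).sub_const c).const_mul G₁
      have h2 := (Real.hasDerivAt_exp (G₁ * (z - c))).comp z h1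
      have h3 := (h2.sub_const 1).const_mul (G₀ / G₁)
      refine h3.congr_deriv ?_
      field_simp
    have hF₂ : ∀ z : ℝ, HasDerivAt (fun y => s * (y - c - r) + E r) s z := by
      intro z
      have h0 := (((hasDerivAt_id z).sub_const (c + r)).const_mul s).add_const (E r)
      simpa [sub_sub] using h0
    rcases lt_trichotomy (x - c) r with h | h | h
    · -- exp region
      have hrpos : 0 < r := lt_of_lt_of_le (by linarith) h.le
      have hs' := hseq hrpos
      have hDeq : D (x - c) = G₀ * Real.exp (G₁ * (x - c)) := by
        simp only [hD_def, min_eq_left h.le]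
        refine min_eq_left ?_
        rw [hs']
        have : Real.exp (G₁ * (x - c)) ≤ Real.exp (G₁ * r) := Real.exp_le_exp.mpr (by nlinarith)
        nlinarith
      rw [hDeq]
      refine (hF₁ x).congr_of_eventuallyEq ?_
      have hmem : Set.Ioo c (c + r) ∈ nhds x := Ioo_mem_nhds hx (by linarith)
      filter_upwards [hmem] with y hy
      have hy1 : (0:ℝ) < y - c := by have := hy.1; linarith
      have habs : |y - c| = y - c := abs_of_pos hy1
      rw [hf, hc_def] at *
      rw [show |y - R/2| = y - R/2 from by rw [← hc_def]; exact habs]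
      rw [if_pos (by rw [← hc_def]; have := hy.2; linarith)]
    · -- glue point x = c + r
      have hxr : x = c + r := by linarith
      have hs' : s = G₀ * Real.exp (G₁ * r) := hseq (by linarith)
      have hDeq : D (x - c) = s := by
        simp only [hD_def, h, min_self]; exact min_eq_right hsle
      rw [hDeq]
      have hleft : HasDerivWithinAt f s (Set.Iic x) x := by
        have hd : HasDerivWithinAt (fun y => (G₀ / G₁) * (Real.exp (G₁ * (y - c)) - 1)) s
            (Set.Iic x) x := by
          have := (hF₁ x).hasDerivWithinAt (s := Set.Iic x)
          rw [show G₀ * Real.exp (G₁ * (x - c)) = s from by rw [h, hs']] at this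
          exact this
        refine hd.congr_of_eventuallyEq ?_ ?_
        · have hmem : Set.Ioi c ∈ nhdsWithin x (Set.Iic x) :=
            nhdsWithin_le_nhds (Ioi_mem_nhds hx)
          filter_upwards [hmem, self_mem_nhdsWithin] with y hy1 hy2
          have habs : |y - c| = y - c := abs_of_pos (by exact sub_pos.mpr hy1)
          rw [hf]
          rw [show |y - R/2| = y - c from habs]
          rw [if_pos (by have : y ≤ x := hy2; linarith [hxr])]
        · rw [hf]
          have habs : |x - R / 2| = r := by rw [← hc_def, h]; exact abs_of_nonneg (by linarith)
          rw [habs, if_pos le_rfl, show x - c = r from h]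
      have hright : HasDerivWithinAt f s (Set.Ici x) x := by
        have hd : HasDerivWithinAt (fun y => s * (y - c - r) + E r) s (Set.Ici x) x :=
          (hF₂ x).hasDerivWithinAt
        refine hd.congr_of_eventuallyEq ?_ ?_
        · filter_upwards [self_mem_nhdsWithin] with y hy
          have hyx : x ≤ y := hy
          have hy1 : 0 < y - c := by linarith
          have habs : |y - c| = y - c := abs_of_pos hy1
          rw [hf, show |y - R/2| = y - c from habs]
          rcases eq_or_lt_of_le (show r ≤ y - c from by linarith [hxr]) with hh | hh
          · rw [if_pos hh.ge, ← hh]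
            simp [hE_def]
          · rw [if_neg (not_le.mpr hh)]
        · rw [hf]
          have habs : |x - R / 2| = r := by rw [← hc_def, h]; exact abs_of_nonneg (by linarith)
          rw [habs, if_pos le_rfl, show x - c = r from h]
          simp [hE_def]
      have := hleft.union hright
      rw [Set.Iic_union_Ici, hasDerivWithinAt_univ] at this
      exact this
    · -- linear region
      have hDeq : D (x - c) = s := by
        simp only [hD_def, min_eq_right h.le]
        exact min_eq_right hsle
      rw [hDeq]
      refine (hF₂ x).congr_of_eventuallyEq ?_
      have hmem : Set.Ioi (c + r) ∈ nhds x := Ioi_mem_nhds (by linarith)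
      filter_upwards [hmem] with y hy
      have hy1 : 0 < y - c := by have : c + r < y := hy; linarith
      have habs : |y - c| = y - c := abs_of_pos hy1
      rw [hf, show |y - R/2| = y - c from habs, if_neg (not_le.mpr (by have : c + r < y := hy; linarith))]
  -- reflection symmetry
  have hrefl : ∀ x, f (2 * c - x) = f x := by
    intro x
    rw [hfφ, hfφ]
    congr 1
    rw [show 2 * c - x - c = -(x - c) by ring, abs_neg]
  have hderL : ∀ x : ℝ, x < c → HasDerivAt f (-(D (c - x))) x := by
    intro x hx
    have h1 : HasDerivAt f (D (c - x)) (2 * c - x) := by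
      have := hderR (2 * c - x) (by linarith)
      simpa [show 2 * c - x - c = c - x by ring] using this
    have hinner : HasDerivAt (fun y : ℝ => 2 * c - y) (-1) x := by
      simpa using (hasDerivAt_id x).const_sub (2 * c)
    have h2 := h1.comp x hinner
    have h3 : (f ∘ fun y : ℝ => 2 * c - y) = f := funext fun y => hrefl y
    rw [h3] at h2
    refine h2.congr_deriv ?_
    ring
  have hDbound : ∀ t : ℝ, 0 ≤ t → D t ≤ G₀ + G₁ * φ t := by
    intro t ht
    by_cases h : t ≤ r
    · have h1 : D t ≤ G₀ * Real.exp (G₁ * t) := by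
        simp only [hD_def, min_eq_left h]
        exact min_le_left _ _
      have hφt : φ t = E t := if_pos h
      have h2 : G₀ + G₁ * E t = G₀ * Real.exp (G₁ * t) := by
        simp only [hE_def]; field_simp; ring
      rw [hφt]; linarith
    · push_neg at h
      have h1 : D t ≤ s := hDle2 t
      have hφt : φ t = s * (t - r) + E r := if_neg (not_le.mpr h)
      have h2 : G₀ + G₁ * E r = G₀ * Real.exp (G₁ * r) := by
        simp only [hE_def]; field_simp; ring
      have h3 : 0 ≤ s * (t - r) := by nlinarith
      rw [hφt]; nlinarith [hsle]
  refine ⟨?_, ?_, ?_⟩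
  · -- convexity
    refine ⟨convex_univ, fun x _ y _ a b ha hb hab => ?_⟩
    have hb1 : b = 1 - a := by linarith
    subst hb1
    set z := a • x + (1 - a) • y with hz
    set g := Real.sign (z - c) * D |z - c| with hg_def
    have e1 : a * (f z + g * (x - z)) ≤ a * f x :=
      mul_le_mul_of_nonneg_left (hsub z x) ha
    have e2 : (1 - a) * (f z + g * (y - z)) ≤ (1 - a) * f y :=
      mul_le_mul_of_nonneg_left (hsub z y) hb
    have key : a * (f z + g * (x - z)) + (1 - a) * (f z + g * (y - z)) = f z := by
      simp only [hz, smul_eq_mul]; ring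
    have hfin : f z ≤ a * f x + (1 - a) * f y := by linarith
    simpa [smul_eq_mul] using hfin
  · -- differentiability at the glue points
    intro hrpos
    constructor
    · exact (hderR (c + r) (by linarith)).differentiableAt
    · exact (hderL (c - r) (by linarith)).differentiableAt
  · -- subgradient bound
    intro x g hg
    have hAA : ∀ d : ℝ, HasDerivAt f d x → g = d := by
      intro d hd
      have hlin : HasDerivAt (fun y : ℝ => g * y) g x := by
        simpa using (hasDerivAt_id x).const_mul g
      have hF : HasDerivAt (fun y => f y - g * y) (d - g) x := hd.sub hlin
      have hmin : IsLocalMin (fun y => f y - g * y) x := by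
        have hall : ∀ y, f x - g * x ≤ f y - g * y := fun y => by
          have h1 := hg y
          have h2 : g * (y - x) = g * y - g * x := by ring
          linarith
        exact Filter.Eventually.of_forall hall
      have h0 := hmin.hasDerivAt_eq_zero hF
      linarith
    rcases lt_trichotomy x c with hx | hx | hx
    · -- left of center
      have hgd := hAA _ (hderL x hx)
      rw [hgd, abs_neg, abs_of_nonneg (hD0 _)]
      have hfx : f x = φ (c - x) := by
        rw [hfφ, show |x - c| = c - x from by
          rw [abs_of_neg (by linarith : x - c < 0)]; ring]
      rw [hfx]
      have := hDbound (c - x) (by linarith)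
      linarith
    · -- center: kink point
      subst hx
      have hfc : f c = 0 := by
        rw [hfφ]
        simp [hφ_def, hE_def, hr0]
      have hφle : ∀ t : ℝ, 0 ≤ t → φ t ≤ E t := by
        intro t ht
        by_cases h : t ≤ r
        · simp only [hφ_def, if_pos h]; exact le_rfl
        · push_neg at h
          have h1 := htan r t
          have h2 : s * (t - r) ≤ G₀ * Real.exp (G₁ * r) * (t - r) :=
            mul_le_mul_of_nonneg_right hsle (by linarith)
          simp only [hφ_def, if_neg (not_le.mpr h)]
          linarith
      have hE0 : E 0 = 0 := by simp [hE_def]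
      have hEderiv : HasDerivAt E G₀ 0 := by
        have h1 : HasDerivAt (fun t : ℝ => G₁ * t) G₁ 0 := by
          simpa using (hasDerivAt_id (0:ℝ)).const_mul G₁
        have h2 := (Real.hasDerivAt_exp (G₁ * 0)).comp 0 h1
        have h3 := (h2.sub_const 1).const_mul (G₀ / G₁)
        refine h3.congr_deriv ?_
        rw [mul_zero, Real.exp_zero]
        field_simp
      have hEslope : Filter.Tendsto (fun δ : ℝ => E δ / δ)
          (nhdsWithin 0 (Set.Ioi 0)) (nhds G₀) := by
        have h1 := hEderiv.hasDerivWithinAt (s := Set.Ioi 0)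
        rw [hasDerivWithinAt_iff_tendsto_slope] at h1
        have h2 : Set.Ioi (0:ℝ) \ {0} = Set.Ioi 0 :=
          Set.diff_singleton_eq_self (by simp)
        rw [h2] at h1
        refine h1.congr fun δ => ?_
        rw [slope_def_field, hE0]
        ring_nf
      have hub : ∀ δ : ℝ, 0 < δ → g ≤ E δ / δ := by
        intro δ hδ
        have h1 := hg (c + δ)
        have h2 : f (c + δ) = φ δ := by
          rw [hfφ, show |c + δ - c| = δ from by
            rw [show c + δ - c = δ by ring]; exact abs_of_pos hδ]
        have h3 := hφle δ hδ.le
        rw [le_div_iff₀ hδ]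
        nlinarith [h1]
      have hlb : ∀ δ : ℝ, 0 < δ → -g ≤ E δ / δ := by
        intro δ hδ
        have h1 := hg (c - δ)
        have h2 : f (c - δ) = φ δ := by
          rw [hfφ, show |c - δ - c| = δ from by
            rw [show c - δ - c = -δ by ring, abs_neg]; exact abs_of_pos hδ]
        have h3 := hφle δ hδ.le
        rw [le_div_iff₀ hδ]
        nlinarith [h1]
      have hg1 : g ≤ G₀ :=
        ge_of_tendsto hEslope (by
          filter_upwards [self_mem_nhdsWithin] with δ hδ
          exact hub δ hδ)
      have hg2 : -g ≤ G₀ :=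
        ge_of_tendsto hEslope (by
          filter_upwards [self_mem_nhdsWithin] with δ hδ
          exact hlb δ hδ)
      have habs : |g| ≤ G₀ := abs_le.mpr ⟨by linarith, hg1⟩
      rw [hfc]
      nlinarith [habs]
    · -- right of center
      have hgd := hAA _ (hderR x hx)
      rw [hgd, abs_of_nonneg (hD0 _)]
      have hfx : f x = φ (x - c) := by
        rw [hfφ, abs_of_pos (by linarith : (0:ℝ) < x - c)]
      rw [hfx]
      have := hDbound (x - c) (by linarith)
      linarith
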